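/- Let t >= 1. Then every colouring f of H_{2t+3} with t_f = t satisfies winst(f) >= 2 + (2t + (t mod 3))/3; that is, winst(2t+3, t) >= 2 + (2t + (t mod 3))/3 (note that 3 divides 2t + (t mod 3)). -/

import Mathlib

open Finset

/-- The number of entries of a point of the hypercube equal to `1` (`true`). -/
def onesCount {n : ℕ} (x : Fin n → Bool) : ℕ :=
  (univ.filter fun i => x i = true).card

/-- The number of entries of a point of the hypercube equal to `0` (`false`). -/
def zerosCount {n : ℕ} (x : Fin n → Bool) : ℕ :=
  (univ.filter fun i => x i = false).card

/-- `P` is a geodesic in the `n`-hypercube: consecutive points differ in exactly one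
entry, and each of the `n` entries changes at exactly one step. -/
def IsGeodesic {n : ℕ} (P : Fin (n+1) → Fin n → Bool) : Prop :=
  ∃ σ : Equiv.Perm (Fin n), ∀ j : Fin n, ∀ ℓ : Fin n,
    P j.succ ℓ = if σ ℓ = j then !(P j.castSucc ℓ) else P j.castSucc ℓ

/-- The number of jumps of the geodesic `P` in the colouring `f`. -/
def jumps {n : ℕ} (f : (Fin n → Bool) → Bool) (P : Fin (n+1) → Fin n → Bool) : ℕ :=
  (univ.filter fun j : Fin n => f (P j.succ) ≠ f (P j.castSucc)).card

/-- `inst f` is the maximum of `jumps f P` over all geodesics `P`. -/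
noncomputable def inst {n : ℕ} (f : (Fin n → Bool) → Bool) : ℕ :=
  sSup {m | ∃ P : Fin (n+1) → Fin n → Bool, IsGeodesic P ∧ m = jumps f P}

/-- `f` respects the balls `B_t(0^n)` and `B_t(1^n)`: it is `0` on all points with at
most `t` ones and `1` on all points with at most `t` zeros. -/
def Respects {n : ℕ} (t : ℕ) (f : (Fin n → Bool) → Bool) : Prop :=
  (∀ x, onesCount x ≤ t → f x = false) ∧ (∀ x, zerosCount x ≤ t → f x = true)

/-- `t_f = t`: `t` is the largest radius whose balls `f` respects. -/
def tfEq {n : ℕ} (f : (Fin n → Bool) → Bool) (t : ℕ) : Prop :=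
  Respects t f ∧ ¬ Respects (t+1) f

/-- `winst t f`: the maximum number of jumps of `f` over all well-ending
`(t+1)`-geodesics (those starting with exactly `t+1` ones, whose first point has
colour `1` or whose last point has colour `0`). -/
noncomputable def winst {n : ℕ} (t : ℕ) (f : (Fin n → Bool) → Bool) : ℕ :=
  sSup {m | ∃ P : Fin (n+1) → Fin n → Bool, IsGeodesic P ∧ onesCount (P 0) = t + 1 ∧
    (f (P 0) = true ∨ f (P (Fin.last n)) = false) ∧ m = jumps f P}

namespace TwoStripsAux

variable {n : ℕ}

def flip (x : Fin n → Bool) (i : Fin n) : Fin n → Bool :=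
  fun ℓ => if ℓ = i then !(x ℓ) else x ℓ

@[simp] lemma flip_self (x : Fin n → Bool) (i : Fin n) : flip x i i = !(x i) := by simp [flip]

lemma flip_other (x : Fin n → Bool) {ℓ i : Fin n} (h : ℓ ≠ i) : flip x i ℓ = x ℓ := by
  simp [flip, h]

lemma onesCount_flip_true {x : Fin n → Bool} {i : Fin n} (h : x i = true) :
    onesCount (flip x i) + 1 = onesCount x := by
  have hset : (univ.filter fun ℓ => flip x i ℓ = true)
      = (univ.filter fun ℓ => x ℓ = true).erase i := by
    ext ℓ
    rcases eq_or_ne ℓ i with rfl | hne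
    · simp [flip, h]
    · simp [flip_other _ hne, hne]
  have hmem : i ∈ univ.filter fun ℓ => x ℓ = true := by simp [h]
  have hpos : 0 < (univ.filter fun ℓ => x ℓ = true).card := Finset.card_pos.mpr ⟨i, hmem⟩
  rw [onesCount, onesCount, hset, Finset.card_erase_of_mem hmem]
  omega

lemma onesCount_flip_false {x : Fin n → Bool} {i : Fin n} (h : x i = false) :
    onesCount (flip x i) = onesCount x + 1 := by
  have hset : (univ.filter fun ℓ => flip x i ℓ = true)
      = insert i (univ.filter fun ℓ => x ℓ = true) := by
    ext ℓ
    rcases eq_or_ne ℓ i with rfl | hne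
    · simp [flip, h]
    · simp [flip_other _ hne, hne]
  have hmem : i ∉ univ.filter fun ℓ => x ℓ = true := by simp [h]
  rw [onesCount, onesCount, hset, Finset.card_insert_of_notMem hmem]

lemma ones_add_zeros (x : Fin n → Bool) : onesCount x + zerosCount x = n := by
  rw [onesCount, zerosCount]
  have : (univ.filter fun i => x i = false) = (univ.filter fun i => ¬ (x i = true)) := by
    apply Finset.filter_congr; intro i _; simp
  rw [this, Finset.card_filter_add_card_filter_not]
  simp

lemma forced_true {t : ℕ} {f : (Fin (2*t+3) → Bool) → Bool} (hR : Respects t f)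
    {x : Fin (2*t+3) → Bool} (h : t + 3 ≤ onesCount x) : f x = true := by
  refine hR.2 x ?_
  have := ones_add_zeros x
  omega

def flipS (x : Fin n → Bool) (S : Finset (Fin n)) : Fin n → Bool :=
  fun ℓ => if ℓ ∈ S then !(x ℓ) else x ℓ

@[simp] lemma flipS_empty (x : Fin n → Bool) : flipS x ∅ = x := by
  funext ℓ; simp [flipS]

lemma flipS_erase {x : Fin n → Bool} {S : Finset (Fin n)} {i : Fin n} (h : i ∈ S) :
    flipS (flip x i) (S.erase i) = flipS x S := by
  funext ℓ
  rcases eq_or_ne ℓ i with rfl | hne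
  · simp [flipS, flip, h]
  · simp [flipS, flip_other _ hne, hne]

def jumpsL (f : (Fin n → Bool) → Bool) : (Fin n → Bool) → List (Fin n) → ℕ
  | _, [] => 0
  | x, i :: L => (if f (flip x i) = f x then 0 else 1) + jumpsL f (flip x i) L

def phi (u d : ℕ) (c e : Bool) : ℕ :=
  if c = e then 2 * ((min d (u - cond c 1 0) + 2) / 3)
  else 2 * (min u (d + cond c 1 0) / 3) + 1

lemma phi_arith_A (u d : ℕ) (e : Bool) (hd : 1 ≤ d) (h1 : u ≤ d + 1) (h2 : d ≤ u + 1) :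
    phi u d true e ≤ 1 + phi u (d-1) false e := by
  cases e <;> simp only [phi, cond] <;> norm_num <;> omega

lemma phi_arith_B (u d : ℕ) (e : Bool) (hd : 1 ≤ d) (h1 : u ≤ d) (h2 : d ≤ u + 1) :
    phi u d true e ≤ phi u (d-1) true e := by
  cases e <;> simp only [phi, cond] <;> norm_num <;> omega

lemma phi_arith_D (u d : ℕ) (e : Bool) (hu : 1 ≤ u) (h1 : d ≤ u) (h2 : u ≤ d + 2) :
    phi u d false e ≤ 1 + phi (u-1) d true e := by
  cases e <;> simp only [phi, cond] <;> norm_num <;> omega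

lemma phi_arith_E (u d : ℕ) (e : Bool) (hu : 1 ≤ u) (h1 : d ≤ u - 1) (h2 : u ≤ d + 2) :
    phi u d false e ≤ phi (u-1) d false e := by
  cases e <;> simp only [phi, cond] <;> norm_num <;> omega

lemma phi_single (e c : Bool) : phi 1 0 c e ≤ if e = c then 0 else 1 := by
  cases e <;> cases c <;> simp [phi]

lemma core (t : ℕ) (f : (Fin (2*t+3) → Bool) → Bool) (hR : Respects t f) (s : ℕ) :
    ∀ (x : Fin (2*t+3) → Bool) (U D : Finset (Fin (2*t+3))),
      (∀ i ∈ U, x i = false) → (∀ i ∈ D, x i = true) →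
      U.card + D.card = s →
      onesCount x + U.card = t + 2 + D.card →
      U.card ≤ D.card + 2 → D.card ≤ U.card + 1 →
      ∃ L : List (Fin (2*t+3)), L.Nodup ∧ L.toFinset = U ∪ D ∧
        phi U.card D.card (f x) (f (flipS x (U ∪ D))) ≤ jumpsL f x L := by
  induction s with
  | zero =>
    intro x U D hU hD hs heq h1 h2
    have hU0 : U = ∅ := Finset.card_eq_zero.mp (by omega)
    have hD0 : D = ∅ := Finset.card_eq_zero.mp (by omega)
    subst hU0; subst hD0
    refine ⟨[], by simp, by simp, ?_⟩
    simp [jumpsL, phi]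
  | succ s ih =>
    intro x U D hU hD hs heq h1 h2
    cases hc : f x with
    | true =>
      have hne2 : U.card ≠ D.card + 2 := by
        intro hcon
        have hle : onesCount x ≤ t := by omega
        have := hR.1 x hle
        rw [hc] at this; exact Bool.noConfusion this
      rcases Nat.eq_zero_or_pos D.card with hd0 | hdpos
      · have hU1 : U.card = 1 := by omega
        obtain ⟨i, hUi⟩ := Finset.card_eq_one.mp hU1
        have hD0 : D = ∅ := Finset.card_eq_zero.mp hd0
        subst hUi; subst hD0
        refine ⟨[i], by simp, by simp, ?_⟩
        have hfs : flipS x ({i} ∪ ∅) = flip x i := by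
          funext ℓ
          rcases eq_or_ne ℓ i with rfl | hne
          · simp [flipS, flip]
          · simp [flipS, flip_other _ hne, hne]
        rw [hfs]
        have h1c : ({i} : Finset (Fin (2*t+3))).card = 1 := by simp
        have h0c : (∅ : Finset (Fin (2*t+3))).card = 0 := by simp
        rw [h1c, h0c]
        refine le_trans (phi_single _ _) ?_
        simp [jumpsL]
        cases he : f (flip x i) <;> simp [he, hc]
      · obtain ⟨i, hiD⟩ := Finset.card_pos.mp hdpos
        have hxi : x i = true := hD i hiD
        have hiU : i ∉ U := fun h => by rw [hU i h] at hxi; exact Bool.noConfusion hxi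
        have hones' : onesCount (flip x i) + 1 = onesCount x := onesCount_flip_true hxi
        have hU' : ∀ j ∈ U, flip x i j = false := by
          intro j hj
          have hne : j ≠ i := fun h => hiU (h ▸ hj)
          rw [flip_other _ hne]; exact hU j hj
        have hD' : ∀ j ∈ D.erase i, flip x i j = true := by
          intro j hj
          have hne : j ≠ i := Finset.ne_of_mem_erase hj
          rw [flip_other _ hne]; exact hD j (Finset.mem_of_mem_erase hj)
        have hcard : (D.erase i).card + 1 = D.card := by
          rw [Finset.card_erase_of_mem hiD]; omega
        have hunion : U ∪ D.erase i = (U ∪ D).erase i := by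
          rw [Finset.erase_union_distrib, Finset.erase_eq_of_notMem hiU]
        have hflipS : flipS (flip x i) (U ∪ D.erase i) = flipS x (U ∪ D) := by
          rw [hunion, flipS_erase (Finset.mem_union_right _ hiD)]
        obtain ⟨L', hnd', hcov', hphi'⟩ := ih (flip x i) U (D.erase i) hU' hD'
          (by omega) (by omega) (by omega) (by omega)
        have hiL' : i ∉ L' := by
          rw [← List.mem_toFinset, hcov']
          intro hmem
          rcases Finset.mem_union.mp hmem with h | h
          · exact hiU h
          · exact Finset.notMem_erase i D h
        refine ⟨i :: L', by simp [hiL', hnd'], ?_, ?_⟩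
        · rw [List.toFinset_cons, hcov', hunion, Finset.insert_erase
            (Finset.mem_union_right _ hiD)]
        · rw [hflipS] at hphi'
          rw [jumpsL, hc]
          rcases eq_or_ne U.card (D.card + 1) with hu | hu
          · have hfx' : f (flip x i) = false := hR.1 (flip x i) (by omega)
            rw [hfx'] at hphi' ⊢
            calc phi U.card D.card true (f (flipS x (U ∪ D)))
                ≤ 1 + phi U.card (D.card - 1) false (f (flipS x (U ∪ D))) :=
                  phi_arith_A _ _ _ (by omega) (by omega) (by omega)
              _ ≤ (if false = true then 0 else 1) + jumpsL f (flip x i) L' := by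
                  simp only [if_neg (by simp : ¬ (false = true))]
                  have : (D.erase i).card = D.card - 1 := by omega
                  rw [this] at hphi'
                  omega
          · have huled : U.card ≤ D.card := by omega
            cases hc' : f (flip x i) with
            | false =>
              rw [hc'] at hphi'
              calc phi U.card D.card true (f (flipS x (U ∪ D)))
                  ≤ 1 + phi U.card (D.card - 1) false (f (flipS x (U ∪ D))) :=
                    phi_arith_A _ _ _ (by omega) (by omega) (by omega)
                _ ≤ (if false = true then 0 else 1) + jumpsL f (flip x i) L' := by
                    simp only [if_neg (by simp : ¬ (false = true))]
                    have : (D.erase i).card = D.card - 1 := by omega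
                    rw [this] at hphi'
                    omega
            | true =>
              rw [hc'] at hphi'
              calc phi U.card D.card true (f (flipS x (U ∪ D)))
                  ≤ phi U.card (D.card - 1) true (f (flipS x (U ∪ D))) :=
                    phi_arith_B _ _ _ (by omega) (by omega) (by omega)
                _ ≤ (if true = true then 0 else 1) + jumpsL f (flip x i) L' := by
                    simp only [if_pos rfl]
                    have : (D.erase i).card = D.card - 1 := by omega
                    rw [this] at hphi'
                    omega
    | false =>
      have hne2 : D.card ≠ U.card + 1 := by
        intro hcon
        have hge : t + 3 ≤ onesCount x := by omega
        have := forced_true hR hge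
        rw [hc] at this; exact Bool.noConfusion this
      have hDU : D.card ≤ U.card := by omega
      have hupos : 0 < U.card := by omega
      obtain ⟨j, hjU⟩ := Finset.card_pos.mp hupos
      have hxj : x j = false := hU j hjU
      have hjD : j ∉ D := fun h => by rw [hD j h] at hxj; exact Bool.noConfusion hxj
      have hones' : onesCount (flip x j) = onesCount x + 1 := onesCount_flip_false hxj
      have hU' : ∀ i ∈ U.erase j, flip x j i = false := by
        intro i hi
        have hne : i ≠ j := Finset.ne_of_mem_erase hi
        rw [flip_other _ hne]; exact hU i (Finset.mem_of_mem_erase hi)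
      have hD' : ∀ i ∈ D, flip x j i = true := by
        intro i hi
        have hne : i ≠ j := fun h => hjD (h ▸ hi)
        rw [flip_other _ hne]; exact hD i hi
      have hcard : (U.erase j).card + 1 = U.card := by
        rw [Finset.card_erase_of_mem hjU]; omega
      have hunion : U.erase j ∪ D = (U ∪ D).erase j := by
        rw [Finset.erase_union_distrib, Finset.erase_eq_of_notMem hjD]
      have hflipS : flipS (flip x j) (U.erase j ∪ D) = flipS x (U ∪ D) := by
        rw [hunion, flipS_erase (Finset.mem_union_left _ hjU)]
      obtain ⟨L', hnd', hcov', hphi'⟩ := ih (flip x j) (U.erase j) D hU' hD'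
        (by omega) (by omega) (by omega) (by omega)
      have hjL' : j ∉ L' := by
        rw [← List.mem_toFinset, hcov']
        intro hmem
        rcases Finset.mem_union.mp hmem with h | h
        · exact Finset.notMem_erase j U h
        · exact hjD h
      refine ⟨j :: L', by simp [hjL', hnd'], ?_, ?_⟩
      · rw [List.toFinset_cons, hcov', hunion, Finset.insert_erase
          (Finset.mem_union_left _ hjU)]
      · rw [hflipS] at hphi'
        rw [jumpsL, hc]
        rcases eq_or_ne D.card U.card with hu | hu
        · have hfx' : f (flip x j) = true := forced_true hR (by omega)
          rw [hfx'] at hphi' ⊢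
          calc phi U.card D.card false (f (flipS x (U ∪ D)))
              ≤ 1 + phi (U.card - 1) D.card true (f (flipS x (U ∪ D))) :=
                phi_arith_D _ _ _ (by omega) (by omega) (by omega)
            _ ≤ (if true = false then 0 else 1) + jumpsL f (flip x j) L' := by
                simp only [if_neg (by simp : ¬ (true = false))]
                have : (U.erase j).card = U.card - 1 := by omega
                rw [this] at hphi'
                omega
        · have hdltu : D.card ≤ U.card - 1 := by omega
          cases hc' : f (flip x j) with
          | true =>
            rw [hc'] at hphi'
            calc phi U.card D.card false (f (flipS x (U ∪ D)))
                ≤ 1 + phi (U.card - 1) D.card true (f (flipS x (U ∪ D))) :=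
                  phi_arith_D _ _ _ (by omega) (by omega) (by omega)
              _ ≤ (if true = false then 0 else 1) + jumpsL f (flip x j) L' := by
                  simp only [if_neg (by simp : ¬ (true = false))]
                  have : (U.erase j).card = U.card - 1 := by omega
                  rw [this] at hphi'
                  omega
          | false =>
            rw [hc'] at hphi'
            calc phi U.card D.card false (f (flipS x (U ∪ D)))
                ≤ phi (U.card - 1) D.card false (f (flipS x (U ∪ D))) :=
                  phi_arith_E _ _ _ (by omega) (by omega) (by omega)
              _ ≤ (if false = false then 0 else 1) + jumpsL f (flip x j) L' := by
                  simp only [if_pos rfl]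
                  have : (U.erase j).card = U.card - 1 := by omega
                  rw [this] at hphi'
                  omega


/-! ### From flip lists to geodesics -/

def flipL (x : Fin n → Bool) (L : List (Fin n)) : Fin n → Bool := L.foldl flip x

@[simp] lemma flipL_nil (x : Fin n → Bool) : flipL x [] = x := rfl

lemma flipL_cons (x : Fin n → Bool) (i : Fin n) (L : List (Fin n)) :
    flipL x (i :: L) = flipL (flip x i) L := rfl

lemma jumpsL_eq_sum (f : (Fin n → Bool) → Bool) :
    ∀ (L : List (Fin n)) (x : Fin n → Bool), jumpsL f x L =
      ∑ j ∈ Finset.range L.length,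
        (if f (flipL x (L.take (j+1))) = f (flipL x (L.take j)) then 0 else 1) := by
  intro L
  induction L with
  | nil => intro x; simp [jumpsL]
  | cons i L ih =>
    intro x
    rw [jumpsL, ih (flip x i), List.length_cons, Finset.sum_range_succ']
    have h0 : (if f (flipL x ((i :: L).take (0+1))) = f (flipL x ((i :: L).take 0)) then 0 else 1)
        = (if f (flip x i) = f x then 0 else 1) := by
      simp [flipL]
    rw [h0, Nat.add_comm]
    congr 1

lemma flipL_take (L : List (Fin n)) (hnd : L.Nodup) :
    ∀ (k : ℕ), k ≤ L.length → ∀ (x : Fin n → Bool) (ℓ : Fin n),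
      flipL x (L.take k) ℓ = if L.idxOf ℓ < k then !(x ℓ) else x ℓ := by
  induction L with
  | nil =>
    intro k hk x ℓ
    simp at hk
    subst hk
    simp
  | cons i L ih =>
    intro k hk x ℓ
    cases k with
    | zero => simp
    | succ m =>
      rw [List.take_succ_cons, flipL_cons,
        ih hnd.of_cons m (by simpa using hk) (flip x i) ℓ]
      rcases eq_or_ne ℓ i with rfl | hne
      · have h2 : ℓ ∉ L := (List.nodup_cons.mp hnd).1
        have h3 : L.idxOf ℓ = L.length := List.idxOf_eq_length h2
        have h4 : ¬ (L.idxOf ℓ < m) := by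
          simp at hk; omega
        rw [if_neg h4, List.idxOf_cons_self, if_pos (Nat.succ_pos m), flip_self]
      · have h5 : (i :: L).idxOf ℓ = L.idxOf ℓ + 1 := List.idxOf_cons_ne _ (Ne.symm hne)
        rw [h5, flip_other _ hne]
        by_cases h : L.idxOf ℓ < m
        · rw [if_pos h, if_pos (by omega)]
        · rw [if_neg h, if_neg (by omega)]

lemma jumps_le (f : (Fin n → Bool) → Bool) (P : Fin (n+1) → Fin n → Bool) :
    jumps f P ≤ n := by
  calc jumps f P ≤ (univ : Finset (Fin n)).card := Finset.card_filter_le _ _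
    _ = n := by simp

lemma bddAbove_winstSet (t : ℕ) (f : (Fin n → Bool) → Bool) :
    BddAbove {m | ∃ P : Fin (n+1) → Fin n → Bool, IsGeodesic P ∧ onesCount (P 0) = t + 1 ∧
      (f (P 0) = true ∨ f (P (Fin.last n)) = false) ∧ m = jumps f P} := by
  refine ⟨n, ?_⟩
  rintro m ⟨P, -, -, -, rfl⟩
  exact jumps_le f P

lemma winst_ge_jumpsL {t : ℕ} {f : (Fin n → Bool) → Bool} (x : Fin n → Bool)
    (L : List (Fin n)) (hnd : L.Nodup) (hcov : ∀ ℓ, ℓ ∈ L)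
    (hones : onesCount x = t + 1)
    (hwe : f x = true ∨ f (fun ℓ => !(x ℓ)) = false) :
    jumpsL f x L ≤ winst t f := by
  have hlen : L.length = n := by
    have h1 : L.toFinset.card = L.length := List.toFinset_card_of_nodup hnd
    have h2 : L.toFinset = (univ : Finset (Fin n)) :=
      Finset.eq_univ_iff_forall.mpr (fun ℓ => List.mem_toFinset.mpr (hcov ℓ))
    rw [h2] at h1
    simp at h1
    omega
  have hmem : ∀ ℓ : Fin n, L.idxOf ℓ < n := by
    intro ℓ
    have := List.idxOf_lt_length_iff.mpr (hcov ℓ)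
    omega
  set P : Fin (n+1) → Fin n → Bool :=
    fun k ℓ => if L.idxOf ℓ < (k : ℕ) then !(x ℓ) else x ℓ with hPdef
  have hinj : Function.Injective (fun ℓ : Fin n => (⟨L.idxOf ℓ, hmem ℓ⟩ : Fin n)) := by
    intro a b h
    simp only [Fin.mk.injEq] at h
    have := List.idxOf_inj (y := b) (hcov a)
    exact this.mp h
  set σ : Equiv.Perm (Fin n) :=
    Equiv.ofBijective _ (Finite.injective_iff_bijective.mp hinj) with hσdef
  have hσ : ∀ ℓ : Fin n, (σ ℓ : ℕ) = L.idxOf ℓ := fun ℓ => rfl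
  have hgeo : IsGeodesic P := by
    refine ⟨σ, fun j ℓ => ?_⟩
    simp only [hPdef, Fin.val_succ, Fin.coe_castSucc]
    rcases eq_or_ne (σ ℓ) j with he | hne
    · have hidx : L.idxOf ℓ = (j : ℕ) := by rw [← hσ ℓ, he]
      rw [if_pos he, hidx, if_pos (by omega), if_neg (by omega)]
    · have hidx : L.idxOf ℓ ≠ (j : ℕ) := by
        rw [← hσ ℓ]
        exact fun h => hne (Fin.ext h)
      rw [if_neg hne]
      by_cases h : L.idxOf ℓ < (j : ℕ)
      · rw [if_pos (by omega), if_pos h]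
      · rw [if_neg (by omega), if_neg h]
  have hP0 : P 0 = x := by
    funext ℓ
    simp [hPdef]
  have hPlast : P (Fin.last n) = fun ℓ => !(x ℓ) := by
    funext ℓ
    simp [hPdef, hmem ℓ]
  have hjump : jumps f P = jumpsL f x L := by
    rw [jumps, Finset.card_filter, jumpsL_eq_sum, hlen, ← Fin.sum_univ_eq_sum_range]
    apply Finset.sum_congr rfl
    intro j _
    have hb1 : P j.succ = flipL x (L.take ((j : ℕ)+1)) := by
      funext ℓ
      rw [flipL_take L hnd ((j : ℕ)+1) (by omega) x ℓ]
      simp [hPdef]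
    have hb2 : P j.castSucc = flipL x (L.take (j : ℕ)) := by
      funext ℓ
      rw [flipL_take L hnd (j : ℕ) (by omega) x ℓ]
      simp [hPdef]
    rw [hb1, hb2]
    by_cases h : f (flipL x (L.take ((j : ℕ)+1))) = f (flipL x (L.take (j : ℕ)))
    · rw [if_pos h, if_neg (by simpa using h)]
    · rw [if_neg h, if_pos (by simpa using h)]
  apply le_csSup (bddAbove_winstSet t f)
  refine ⟨P, hgeo, by rw [hP0]; exact hones, ?_, hjump.symm⟩
  rw [hP0, hPlast]
  exact hwe


/-! ### Case A: two 1-coloured points at level `t+1` at distance 2 -/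

lemma phi_caseA (t : ℕ) (e : Bool) : (2 * t + t % 3) / 3 ≤ phi (t+1) t true e := by
  cases e <;> simp only [phi, cond] <;> norm_num <;> omega

lemma caseA {t : ℕ} {f : (Fin (2*t+3) → Bool) → Bool} (hR : Respects t f)
    (a : Fin (2*t+3) → Bool) (i j : Fin (2*t+3))
    (h1 : onesCount a = t + 1) (hfa : f a = true)
    (hai : a i = false) (haj : a j = true)
    (hfa' : f (flip (flip a j) i) = true) :
    2 + (2 * t + t % 3) / 3 ≤ winst t f := by
  have hij : i ≠ j := fun h => by rw [h, haj] at hai; exact Bool.noConfusion hai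
  set v := flip a j with hv
  set a' := flip v i with ha'
  have hvones : onesCount v + 1 = onesCount a := onesCount_flip_true haj
  have hfv : f v = false := hR.1 v (by omega)
  have hvi : v i = false := by rw [hv, flip_other _ hij]; exact hai
  have ha'ones : onesCount a' = t + 1 := by
    rw [ha', onesCount_flip_false hvi]; omega
  have ha'j : a' j = false := by
    rw [ha', flip_other _ (Ne.symm hij), hv, flip_self, haj]; rfl
  have ha'i : a' i = true := by
    rw [ha', flip_self, hvi]; rfl
  set U := (univ.filter fun ℓ => a' ℓ = false).erase j with hU
  set D := (univ.filter fun ℓ => a' ℓ = true).erase i with hD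
  have hUcard : U.card = t + 1 := by
    have h2 : (univ.filter fun ℓ => a' ℓ = false).card = t + 2 := by
      have := ones_add_zeros a'
      rw [ha'ones] at this
      have hz : zerosCount a' = (univ.filter fun ℓ => a' ℓ = false).card := rfl
      omega
    rw [hU, Finset.card_erase_of_mem (by simp [ha'j]), h2]
    omega
  have hDcard : D.card = t := by
    have h2 : (univ.filter fun ℓ => a' ℓ = true).card = t + 1 := ha'ones
    rw [hD, Finset.card_erase_of_mem (by simp [ha'i]), h2]
    omega
  have hUmem : ∀ ℓ ∈ U, a' ℓ = false := by
    intro ℓ hℓ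
    exact (Finset.mem_filter.mp (Finset.mem_of_mem_erase hℓ)).2
  have hDmem : ∀ ℓ ∈ D, a' ℓ = true := by
    intro ℓ hℓ
    exact (Finset.mem_filter.mp (Finset.mem_of_mem_erase hℓ)).2
  obtain ⟨L', hnd', hcov', hphi'⟩ := core t f hR (U.card + D.card) a' U D hUmem hDmem rfl
    (by omega) (by omega) (by omega)
  have hiUD : i ∉ U ∪ D := by
    intro h
    rcases Finset.mem_union.mp h with h | h
    · have := hUmem i h; rw [ha'i] at this; exact Bool.noConfusion this
    · exact Finset.notMem_erase i _ h
  have hjUD : j ∉ U ∪ D := by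
    intro h
    rcases Finset.mem_union.mp h with h | h
    · exact Finset.notMem_erase j _ h
    · have := hDmem j h; rw [ha'j] at this; exact Bool.noConfusion this
  have hcovUD : ∀ ℓ : Fin (2*t+3), ℓ ≠ i → ℓ ≠ j → ℓ ∈ U ∪ D := by
    intro ℓ hℓi hℓj
    cases hb : a' ℓ with
    | false => exact Finset.mem_union_left _ (Finset.mem_erase.mpr ⟨hℓj, by simp [hb]⟩)
    | true => exact Finset.mem_union_right _ (Finset.mem_erase.mpr ⟨hℓi, by simp [hb]⟩)
  have hflipSval : flipS a' (U ∪ D) = fun ℓ => !(a ℓ) := by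
    funext ℓ
    rcases eq_or_ne ℓ i with rfl | hℓi
    · rw [flipS, if_neg hiUD, ha'i, hai]; rfl
    · rcases eq_or_ne ℓ j with rfl | hℓj
      · rw [flipS, if_neg hjUD, ha'j, haj]; rfl
      · have haℓ : a' ℓ = a ℓ := by
          rw [ha', flip_other _ hℓi, hv, flip_other _ hℓj]
        rw [flipS, if_pos (hcovUD ℓ hℓi hℓj), haℓ]
  -- assemble the list
  have hiL' : i ∉ L' := fun h => hiUD (hcov' ▸ List.mem_toFinset.mpr h)
  have hjL' : j ∉ L' := fun h => hjUD (hcov' ▸ List.mem_toFinset.mpr h)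
  have hnd : (j :: i :: L').Nodup := by
    simp [hnd', hiL', hjL', hij, Ne.symm hij]
  have hcov : ∀ ℓ : Fin (2*t+3), ℓ ∈ (j :: i :: L') := by
    intro ℓ
    rcases eq_or_ne ℓ j with rfl | hℓj
    · exact List.mem_cons_self
    · rcases eq_or_ne ℓ i with rfl | hℓi
      · exact List.mem_cons_of_mem _ (List.mem_cons_self)
      · refine List.mem_cons_of_mem _ (List.mem_cons_of_mem _ ?_)
        exact List.mem_toFinset.mp (hcov' ▸ hcovUD ℓ hℓi hℓj)
  have hjumps : 2 + phi (t+1) t true (f (fun ℓ => !(a ℓ))) ≤ jumpsL f a (j :: i :: L') := by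
    rw [jumpsL, jumpsL]
    rw [← hv, ← ha']
    rw [hfa, hfv, hfa']
    have := hphi'
    rw [hflipSval] at this
    rw [hUcard, hDcard, hfa'] at this
    simp only [if_neg (by simp : ¬ (false = true)), if_neg (by simp : ¬ (true = false))]
    omega
  calc 2 + (2 * t + t % 3) / 3
      ≤ 2 + phi (t+1) t true (f (fun ℓ => !(a ℓ))) := by
        have := phi_caseA t (f (fun ℓ => !(a ℓ))); omega
    _ ≤ jumpsL f a (j :: i :: L') := hjumps
    _ ≤ winst t f := winst_ge_jumpsL a _ hnd hcov h1 (Or.inl hfa)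


/-! ### The complement-reversal symmetry -/

def fstar (f : (Fin n → Bool) → Bool) : (Fin n → Bool) → Bool :=
  fun x => !(f (fun ℓ => !(x ℓ)))

lemma fstar_fstar (f : (Fin n → Bool) → Bool) : fstar (fstar f) = f := by
  funext x
  simp [fstar]

lemma f_compl (f : (Fin n → Bool) → Bool) (x : Fin n → Bool) :
    f (fun ℓ => !(x ℓ)) = !(fstar f x) := by simp [fstar]

lemma zerosCount_compl (x : Fin n → Bool) : zerosCount (fun ℓ => !(x ℓ)) = onesCount x := by
  rw [onesCount, zerosCount]
  congr 1
  ext ℓ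
  simp

lemma onesCount_compl (x : Fin n → Bool) : onesCount (fun ℓ => !(x ℓ)) = zerosCount x := by
  rw [onesCount, zerosCount]
  congr 1
  ext ℓ
  simp

lemma respects_fstar {t : ℕ} {f : (Fin n → Bool) → Bool} (hR : Respects t f) :
    Respects t (fstar f) := by
  constructor
  · intro x hx
    have h : zerosCount (fun ℓ => !(x ℓ)) ≤ t := by rw [zerosCount_compl]; exact hx
    rw [fstar, hR.2 _ h]
    rfl
  · intro x hx
    have h : onesCount (fun ℓ => !(x ℓ)) ≤ t := by rw [onesCount_compl]; exact hx
    rw [fstar, hR.1 _ h]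
    rfl

lemma geodesic_eq {P : Fin (n+1) → Fin n → Bool} (σ : Equiv.Perm (Fin n))
    (hσ : ∀ j ℓ, P j.succ ℓ = if σ ℓ = j then !(P j.castSucc ℓ) else P j.castSucc ℓ) :
    ∀ (k : ℕ) (hk : k ≤ n) (ℓ : Fin n),
      P ⟨k, by omega⟩ ℓ = if (σ ℓ : ℕ) < k then !(P 0 ℓ) else P 0 ℓ := by
  intro k
  induction k with
  | zero =>
    intro hk ℓ
    simp only [Nat.not_lt_zero, if_neg (by omega : ¬ ((σ ℓ : ℕ) < 0))]
    rfl
  | succ m ihm =>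
    intro hk ℓ
    have hm : m < n := by omega
    have hstep := hσ ⟨m, hm⟩ ℓ
    have hsucc : (⟨m, hm⟩ : Fin n).succ = (⟨m+1, by omega⟩ : Fin (n+1)) := rfl
    have hcast : (⟨m, hm⟩ : Fin n).castSucc = (⟨m, by omega⟩ : Fin (n+1)) := rfl
    rw [hsucc, hcast] at hstep
    rw [hstep]
    rcases eq_or_ne (σ ℓ) ⟨m, hm⟩ with he | hne
    · have hv : (σ ℓ : ℕ) = m := by rw [he]
      rw [if_pos he, ihm (by omega), if_neg (by omega), if_pos (by omega)]
    · have hv : (σ ℓ : ℕ) ≠ m := fun h => hne (Fin.ext h)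
      rw [if_neg hne, ihm (by omega)]
      by_cases h : (σ ℓ : ℕ) < m
      · rw [if_pos h, if_pos (by omega)]
      · rw [if_neg h, if_neg (by omega)]

lemma geodesic_last {P : Fin (n+1) → Fin n → Bool} (h : IsGeodesic P) :
    P (Fin.last n) = fun ℓ => !(P 0 ℓ) := by
  obtain ⟨σ, hσ⟩ := h
  funext ℓ
  have := geodesic_eq σ hσ n le_rfl ℓ
  have hlast : (⟨n, by omega⟩ : Fin (n+1)) = Fin.last n := rfl
  rw [hlast] at this
  rw [this, if_pos (σ ℓ).isLt]

lemma winst_fstar_le (t : ℕ) (f : (Fin n → Bool) → Bool) :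
    winst t (fstar f) ≤ winst t f := by
  have hsub : {m | ∃ P : Fin (n+1) → Fin n → Bool, IsGeodesic P ∧ onesCount (P 0) = t + 1 ∧
      (fstar f (P 0) = true ∨ fstar f (P (Fin.last n)) = false) ∧ m = jumps (fstar f) P}
      ⊆ {m | ∃ P : Fin (n+1) → Fin n → Bool, IsGeodesic P ∧ onesCount (P 0) = t + 1 ∧
      (f (P 0) = true ∨ f (P (Fin.last n)) = false) ∧ m = jumps f P} := by
    rintro m ⟨P, hgeo, hones, hwe, rfl⟩
    have hlastP := geodesic_last hgeo
    obtain ⟨σ, hσ⟩ := hgeo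
    set P' : Fin (n+1) → Fin n → Bool := fun k ℓ => !(P k.rev ℓ) with hP'
    have hrev1 : ∀ j : Fin n, (j.succ : Fin (n+1)).rev = j.rev.castSucc := by
      intro j
      apply Fin.ext
      simp only [Fin.val_rev, Fin.val_succ, Fin.coe_castSucc]
      omega
    have hrev2 : ∀ j : Fin n, (j.castSucc : Fin (n+1)).rev = j.rev.succ := by
      intro j
      apply Fin.ext
      simp only [Fin.val_rev, Fin.val_succ, Fin.coe_castSucc]
      have := j.isLt
      omega
    have e1 : ∀ j : Fin n, P' j.succ = fun ℓ => !(P j.rev.castSucc ℓ) := by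
      intro j; funext ℓ; rw [hP']; simp only [hrev1 j]
    have e2 : ∀ j : Fin n, P' j.castSucc = fun ℓ => !(P j.rev.succ ℓ) := by
      intro j; funext ℓ; rw [hP']; simp only [hrev2 j]
    have hgeo' : IsGeodesic P' := by
      refine ⟨σ.trans (Fin.revPerm), fun j ℓ => ?_⟩
      have hstep := hσ j.rev ℓ
      rcases eq_or_ne (σ ℓ) j.rev with he | hne
      · have hcond : (σ.trans Fin.revPerm) ℓ = j := by
          simp [Equiv.trans_apply, he, Fin.rev_rev]
        rw [if_pos hcond, e1 j, e2 j]
        simp only []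
        rw [hstep, if_pos he]
        simp
      · have hcond : (σ.trans Fin.revPerm) ℓ ≠ j := by
          simp only [Equiv.trans_apply]
          intro h
          apply hne
          have h0 : (σ ℓ).rev = j := h
          have h2 : (σ ℓ).rev.rev = j.rev := congrArg Fin.rev h0
          rwa [Fin.rev_rev] at h2
        rw [if_neg hcond, e1 j, e2 j]
        simp only []
        rw [hstep, if_neg hne]
    have hrev0 : (0 : Fin (n+1)).rev = Fin.last n := by
      apply Fin.ext
      simp [Fin.val_rev]
    have hrevlast : (Fin.last n).rev = 0 := by
      apply Fin.ext
      simp [Fin.val_rev]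
    have hP'0 : P' 0 = P 0 := by
      funext ℓ
      rw [hP']
      simp only [hrev0]
      rw [hlastP]
      simp
    have hP'last : P' (Fin.last n) = fun ℓ => !(P 0 ℓ) := by
      funext ℓ
      rw [hP']
      simp only [hrevlast]
    have hcompl0 : (fun ℓ => !(P 0 ℓ)) = P (Fin.last n) := by
      rw [hlastP]
    have hwe' : f (P' 0) = true ∨ f (P' (Fin.last n)) = false := by
      rcases hwe with h | h
      · right
        rw [hP'last, f_compl f (P 0)]
        rw [h]
        rfl
      · left
        have : fstar f (P (Fin.last n)) = !(f (fun ℓ => !(P (Fin.last n) ℓ))) := by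
          simp [fstar]
        rw [this] at h
        have h2 : (fun ℓ => !(P (Fin.last n) ℓ)) = P 0 := by
          rw [hlastP]
          funext ℓ
          simp
        rw [h2] at h
        rw [hP'0]
        cases hb : f (P 0)
        · rw [hb] at h; exact Bool.noConfusion h
        · rfl
    have hjeq : jumps f P' = jumps (fstar f) P := by
      rw [jumps, jumps]
      refine Finset.card_bij (fun j _ => j.rev) ?_ ?_ ?_
      · intro j hj
        simp only [Finset.mem_filter, Finset.mem_univ, true_and] at hj ⊢
        rw [e1 j, e2 j, f_compl f (P j.rev.castSucc), f_compl f (P j.rev.succ)] at hj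
        intro hcon
        apply hj
        rw [hcon]
      · intro a _ b _ h
        have h0 : a.rev = b.rev := h
        have h2 : a.rev.rev = b.rev.rev := congrArg Fin.rev h0
        rwa [Fin.rev_rev, Fin.rev_rev] at h2
      · intro b hb
        refine ⟨b.rev, ?_, Fin.rev_rev b⟩
        simp only [Finset.mem_filter, Finset.mem_univ, true_and] at hb ⊢
        rw [e1 b.rev, e2 b.rev, f_compl f _, f_compl f _, Fin.rev_rev]
        intro hcon
        apply hb
        have := congrArg (fun b => !b) hcon
        simpa using this.symm
    exact ⟨P', hgeo', by rw [hP'0]; exact hones, hwe', hjeq.symm⟩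
  rcases Set.eq_empty_or_nonempty {m | ∃ P : Fin (n+1) → Fin n → Bool, IsGeodesic P ∧
      onesCount (P 0) = t + 1 ∧
      (fstar f (P 0) = true ∨ fstar f (P (Fin.last n)) = false) ∧ m = jumps (fstar f) P}
    with he | hne
  · rw [winst, he, csSup_empty]
    exact Nat.zero_le _
  · exact csSup_le_csSup (bddAbove_winstSet t f) hne hsub


/-! ### Flip algebra -/

lemma flip_flip (x : Fin n → Bool) (i : Fin n) : flip (flip x i) i = x := by
  funext ℓ
  rcases eq_or_ne ℓ i with rfl | hne
  · simp [flip]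
  · simp [flip_other _ hne]

lemma flip_comm (x : Fin n → Bool) (a b : Fin n) :
    flip (flip x a) b = flip (flip x b) a := by
  rcases eq_or_ne a b with rfl | hab
  · rfl
  · funext ℓ
    by_cases ha : ℓ = a
    · subst ha
      rw [flip_other _ hab, flip_self, flip_self, flip_other _ hab]
    · by_cases hb : ℓ = b
      · subst hb
        rw [flip_self, flip_other _ (Ne.symm hab), flip_other _ (Ne.symm hab), flip_self]
      · rw [flip_other _ hb, flip_other _ ha, flip_other _ ha, flip_other _ hb]

/-! ### The spread case: zigzag -/

lemma zig {t : ℕ} {f : (Fin (2*t+3) → Bool) → Bool} (hR : Respects t f)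
    (hA : ∀ x (i j : Fin (2*t+3)), onesCount x = t+1 → f x = true → x i = false → x j = true →
      f (flip (flip x j) i) = false)
    (hB : ∀ y (i j : Fin (2*t+3)), onesCount y = t+2 → f y = false → y i = false → y j = true →
      f (flip (flip y j) i) = true) :
    ∀ (m : ℕ) (x : Fin (2*t+3) → Bool) (U D : Finset (Fin (2*t+3))),
      f x = true → onesCount x = t + 2 →
      (∀ i ∈ U, x i = false) → (∀ i ∈ D, x i = true) →
      U.card = m → D.card = m →
      ∃ L : List (Fin (2*t+3)), L.Nodup ∧ L.toFinset = U ∪ D ∧ 2*(m-1) ≤ jumpsL f x L := by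
  intro m
  induction m with
  | zero =>
    intro x U D _ _ _ _ hUc hDc
    have hU0 : U = ∅ := Finset.card_eq_zero.mp hUc
    have hD0 : D = ∅ := Finset.card_eq_zero.mp hDc
    refine ⟨[], by simp, by simp [hU0, hD0], by simp⟩
  | succ m ih =>
    intro x U D hfx hones hU hD hUc hDc
    rcases Nat.eq_zero_or_pos m with rfl | hm
    · obtain ⟨i, hDi⟩ := Finset.card_eq_one.mp hDc
      obtain ⟨j, hUj⟩ := Finset.card_eq_one.mp hUc
      have hxi : x i = true := hD i (by simp [hDi])
      have hxj : x j = false := hU j (by simp [hUj])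
      have hij : i ≠ j := fun h => by rw [h, hxj] at hxi; exact Bool.noConfusion hxi
      refine ⟨[i, j], by simp [hij], ?_, by simp⟩
      rw [hUj, hDi]
      ext ℓ
      simp [or_comm]
    · -- m ≥ 1, both cards ≥ 2
      have hD2 : 1 < D.card := by omega
      have hU2 : 1 < U.card := by omega
      obtain ⟨i₁, hi₁, i₂, hi₂, hi12⟩ := Finset.one_lt_card.mp hD2
      have hdown : ∃ i ∈ D, f (flip x i) = false := by
        by_cases hc1 : f (flip x i₁) = false
        · exact ⟨i₁, hi₁, hc1⟩
        · have hc1' : f (flip x i₁) = true := by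
            cases hb : f (flip x i₁)
            · exact absurd hb hc1
            · rfl
          refine ⟨i₂, hi₂, ?_⟩
          have h1 : onesCount (flip x i₁) = t+1 := by
            have := onesCount_flip_true (hD _ hi₁); omega
          have h2 : flip x i₁ i₁ = false := by rw [flip_self, hD _ hi₁]; rfl
          have h3 : flip x i₁ i₂ = true := by
            rw [flip_other _ (Ne.symm hi12)]; exact hD _ hi₂
          have hcon := hA (flip x i₁) i₁ i₂ h1 hc1' h2 h3
          have hsimp : flip (flip (flip x i₁) i₂) i₁ = flip x i₂ := by
            rw [flip_comm (flip x i₁) i₂ i₁, flip_flip]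
          rwa [hsimp] at hcon
      obtain ⟨i, hiD, hfxi⟩ := hdown
      have hxi : x i = true := hD i hiD
      have honesv : onesCount (flip x i) = t+1 := by
        have := onesCount_flip_true hxi; omega
      obtain ⟨j₁, hj₁, j₂, hj₂, hj12⟩ := Finset.one_lt_card.mp hU2
      have hiU : ∀ u ∈ U, u ≠ i := by
        intro u hu h
        rw [h] at hu
        have := hU i hu
        rw [hxi] at this; exact Bool.noConfusion this
      have hup : ∃ j ∈ U, f (flip (flip x i) j) = true := by
        by_cases hc1 : f (flip (flip x i) j₁) = true
        · exact ⟨j₁, hj₁, hc1⟩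
        · have hc1' : f (flip (flip x i) j₁) = false := by
            cases hb : f (flip (flip x i) j₁)
            · rfl
            · exact absurd hb hc1
          refine ⟨j₂, hj₂, ?_⟩
          have hvj₁ : flip x i j₁ = false := by
            rw [flip_other _ (hiU _ hj₁)]; exact hU _ hj₁
          have hvj₂ : flip x i j₂ = false := by
            rw [flip_other _ (hiU _ hj₂)]; exact hU _ hj₂
          have hy1 : onesCount (flip (flip x i) j₁) = t+2 := by
            rw [onesCount_flip_false hvj₁, honesv]
          have hyj₁ : flip (flip x i) j₁ j₁ = true := by
            rw [flip_self, hvj₁]; rfl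
          have hyj₂ : flip (flip x i) j₁ j₂ = false := by
            rw [flip_other _ (Ne.symm hj12)]; exact hvj₂
          have hcon := hB (flip (flip x i) j₁) j₂ j₁ hy1 hc1' hyj₂ hyj₁
          have hsimp : flip (flip (flip (flip x i) j₁) j₁) j₂ = flip (flip x i) j₂ := by
            rw [flip_flip]
          rwa [hsimp] at hcon
      obtain ⟨j, hjU, hfxij⟩ := hup
      have hxj : x j = false := hU j hjU
      have hij : i ≠ j := fun h => by rw [h, hxj] at hxi; exact Bool.noConfusion hxi
      have hvj : flip x i j = false := by rw [flip_other _ (Ne.symm hij)]; exact hxj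
      have honesb : onesCount (flip (flip x i) j) = t+2 := by
        rw [onesCount_flip_false hvj, honesv]
      have hU' : ∀ u ∈ U.erase j, flip (flip x i) j u = false := by
        intro u hu
        have h1 : u ≠ j := Finset.ne_of_mem_erase hu
        have h2 : u ≠ i := hiU _ (Finset.mem_of_mem_erase hu)
        rw [flip_other _ h1, flip_other _ h2]
        exact hU _ (Finset.mem_of_mem_erase hu)
      have hD' : ∀ d ∈ D.erase i, flip (flip x i) j d = true := by
        intro d hd
        have h1 : d ≠ i := Finset.ne_of_mem_erase hd
        have h2 : d ≠ j := by
          intro h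
          rw [h] at hd
          have := hD j (Finset.mem_of_mem_erase hd)
          rw [hxj] at this; exact Bool.noConfusion this
        rw [flip_other _ h2, flip_other _ h1]
        exact hD _ (Finset.mem_of_mem_erase hd)
      obtain ⟨L', hnd', hcov', hjump'⟩ := ih (flip (flip x i) j) (U.erase j) (D.erase i)
        hfxij honesb hU' hD'
        (by rw [Finset.card_erase_of_mem hjU]; omega)
        (by rw [Finset.card_erase_of_mem hiD]; omega)
      have hiL' : i ∉ L' := by
        rw [← List.mem_toFinset, hcov']
        intro h
        rcases Finset.mem_union.mp h with h | h
        · exact (hiU _ (Finset.mem_of_mem_erase h)) rfl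
        · exact Finset.notMem_erase i D h
      have hjL' : j ∉ L' := by
        rw [← List.mem_toFinset, hcov']
        intro h
        rcases Finset.mem_union.mp h with h | h
        · exact Finset.notMem_erase j U h
        · have := hD j (Finset.mem_of_mem_erase h)
          rw [hxj] at this; exact Bool.noConfusion this
      refine ⟨i :: j :: L', by simp [hnd', hiL', hjL', hij], ?_, ?_⟩
      · rw [List.toFinset_cons, List.toFinset_cons, hcov']
        ext ℓ
        simp only [Finset.mem_insert, Finset.mem_union, Finset.mem_erase]
        constructor
        · rintro (rfl | rfl | ⟨⟨h1, h2⟩ | ⟨h1, h2⟩⟩)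
          · exact Or.inr hiD
          · exact Or.inl hjU
          · exact Or.inl h2
          · exact Or.inr h2
        · rintro (h | h)
          · rcases eq_or_ne ℓ j with rfl | hne
            · exact Or.inr (Or.inl rfl)
            · exact Or.inr (Or.inr (Or.inl ⟨hne, h⟩))
          · rcases eq_or_ne ℓ i with rfl | hne
            · exact Or.inl rfl
            · exact Or.inr (Or.inr (Or.inr ⟨hne, h⟩))
      · rw [jumpsL, jumpsL, hfx, hfxi, hfxij]
        simp only [if_neg (by simp : ¬ (false = true)), if_neg (by simp : ¬ (true = false))]
        omega

lemma caseC {t : ℕ} {f : (Fin (2*t+3) → Bool) → Bool} (hR : Respects t f) (ht2 : 2 ≤ t)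
    (hA : ∀ x (i j : Fin (2*t+3)), onesCount x = t+1 → f x = true → x i = false → x j = true →
      f (flip (flip x j) i) = false)
    (hB : ∀ y (i j : Fin (2*t+3)), onesCount y = t+2 → f y = false → y i = false → y j = true →
      f (flip (flip y j) i) = true)
    (a : Fin (2*t+3) → Bool) (h1 : onesCount a = t + 1) (hfa : f a = true) :
    2 + (2 * t + t % 3) / 3 ≤ winst t f := by
  have hZcard : (univ.filter fun ℓ => a ℓ = false).card = t + 2 := by
    have h := ones_add_zeros a
    have hz : zerosCount a = (univ.filter fun ℓ => a ℓ = false).card := rfl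
    omega
  obtain ⟨i₀, hi₀mem⟩ := Finset.card_pos.mp (show 0 < (univ.filter fun ℓ => a ℓ = true).card by
    rw [show (univ.filter fun ℓ => a ℓ = true).card = onesCount a from rfl, h1]; omega)
  have hai₀ : a i₀ = true := (Finset.mem_filter.mp hi₀mem).2
  obtain ⟨j₀, hj₀mem⟩ := Finset.card_pos.mp (show 0 < (univ.filter fun ℓ => a ℓ = false).card by
    rw [hZcard]; omega)
  have haj₀ : a j₀ = false := (Finset.mem_filter.mp hj₀mem).2
  have hi₀j₀ : i₀ ≠ j₀ := fun h => by rw [h, haj₀] at hai₀; exact Bool.noConfusion hai₀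
  set v := flip a i₀ with hv
  have honesv : onesCount v + 1 = onesCount a := onesCount_flip_true hai₀
  have hfv : f v = false := hR.1 v (by omega)
  have hvj₀ : v j₀ = false := by rw [hv, flip_other _ (Ne.symm hi₀j₀)]; exact haj₀
  set a₁ := flip v j₀ with ha₁
  have honesa₁ : onesCount a₁ = t + 1 := by rw [ha₁, onesCount_flip_false hvj₀]; omega
  have hfa₁ : f a₁ = false := hA a j₀ i₀ h1 hfa haj₀ hai₀
  -- choose j₁ among zeros of a other than j₀ with f (flip a₁ j₁) = true
  have hcard2 : 1 < ((univ.filter fun ℓ => a ℓ = false).erase j₀).card := by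
    rw [Finset.card_erase_of_mem hj₀mem, hZcard]; omega
  obtain ⟨jc₁, hjc₁, jc₂, hjc₂, hjc12⟩ := Finset.one_lt_card.mp hcard2
  have hjprop : ∀ jc ∈ (univ.filter fun ℓ => a ℓ = false).erase j₀,
      a₁ jc = false := by
    intro jc hjc
    have h1' : jc ≠ j₀ := Finset.ne_of_mem_erase hjc
    have h2' : a jc = false := (Finset.mem_filter.mp (Finset.mem_of_mem_erase hjc)).2
    have h3' : jc ≠ i₀ := fun h => by rw [h, hai₀] at h2'; exact Bool.noConfusion h2'
    rw [ha₁, flip_other _ h1', hv, flip_other _ h3']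
    exact h2'
  have hup : ∃ jc ∈ (univ.filter fun ℓ => a ℓ = false).erase j₀,
      f (flip a₁ jc) = true := by
    by_cases hc1 : f (flip a₁ jc₁) = true
    · exact ⟨jc₁, hjc₁, hc1⟩
    · have hc1' : f (flip a₁ jc₁) = false := by
        cases hb : f (flip a₁ jc₁)
        · rfl
        · exact absurd hb hc1
      refine ⟨jc₂, hjc₂, ?_⟩
      have hy1 : onesCount (flip a₁ jc₁) = t+2 := by
        rw [onesCount_flip_false (hjprop _ hjc₁), honesa₁]
      have hyj₁ : flip a₁ jc₁ jc₁ = true := by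
        rw [flip_self, hjprop _ hjc₁]; rfl
      have hyj₂ : flip a₁ jc₁ jc₂ = false := by
        rw [flip_other _ (Ne.symm hjc12)]; exact hjprop _ hjc₂
      have hcon := hB (flip a₁ jc₁) jc₂ jc₁ hy1 hc1' hyj₂ hyj₁
      have hsimp : flip (flip (flip a₁ jc₁) jc₁) jc₂ = flip a₁ jc₂ := by
        rw [flip_flip]
      rwa [hsimp] at hcon
  obtain ⟨j₁, hj₁mem, hfb₁⟩ := hup
  have hj₁j₀ : j₁ ≠ j₀ := Finset.ne_of_mem_erase hj₁mem
  have haj₁ : a j₁ = false := (Finset.mem_filter.mp (Finset.mem_of_mem_erase hj₁mem)).2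
  have hj₁i₀ : j₁ ≠ i₀ := fun h => by rw [h, hai₀] at haj₁; exact Bool.noConfusion haj₁
  set b₁ := flip a₁ j₁ with hb₁
  have honesb₁ : onesCount b₁ = t + 2 := by
    rw [hb₁, onesCount_flip_false (hjprop _ hj₁mem), honesa₁]
  -- the zig
  set U'' := ((univ.filter fun ℓ => a ℓ = false).erase j₀).erase j₁ with hU''
  set D'' := (univ.filter fun ℓ => a ℓ = true).erase i₀ with hD''
  have hUc : U''.card = t := by
    rw [hU'', Finset.card_erase_of_mem hj₁mem, Finset.card_erase_of_mem hj₀mem, hZcard]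
    omega
  have hDc : D''.card = t := by
    rw [hD'', Finset.card_erase_of_mem hi₀mem,
      show (univ.filter fun ℓ => a ℓ = true).card = onesCount a from rfl, h1]
    omega
  have hUprop : ∀ u ∈ U'', b₁ u = false := by
    intro u hu
    have h1' : u ≠ j₁ := Finset.ne_of_mem_erase hu
    rw [hb₁, flip_other _ h1']
    exact hjprop _ (Finset.mem_of_mem_erase hu)
  have hDprop : ∀ d ∈ D'', b₁ d = true := by
    intro d hd
    have h1' : d ≠ i₀ := Finset.ne_of_mem_erase hd
    have h2' : a d = true := (Finset.mem_filter.mp (Finset.mem_of_mem_erase hd)).2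
    have h3' : d ≠ j₁ := fun h => by rw [h, haj₁] at h2'; exact Bool.noConfusion h2'
    have h4' : d ≠ j₀ := fun h => by rw [h, haj₀] at h2'; exact Bool.noConfusion h2'
    rw [hb₁, flip_other _ h3', ha₁, flip_other _ h4', hv, flip_other _ h1']
    exact h2'
  obtain ⟨L'', hnd'', hcov'', hjump''⟩ := zig hR hA hB t b₁ U'' D'' hfb₁ honesb₁
    hUprop hDprop hUc hDc
  -- assemble
  have hi₀L : i₀ ∉ L'' := by
    rw [← List.mem_toFinset, hcov'']
    intro h
    rcases Finset.mem_union.mp h with h | h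
    · have h2' : a i₀ = false :=
        (Finset.mem_filter.mp (Finset.mem_of_mem_erase (Finset.mem_of_mem_erase h))).2
      rw [hai₀] at h2'; exact Bool.noConfusion h2'
    · exact Finset.notMem_erase i₀ _ h
  have hj₀L : j₀ ∉ L'' := by
    rw [← List.mem_toFinset, hcov'']
    intro h
    rcases Finset.mem_union.mp h with h | h
    · exact Finset.notMem_erase j₀ _ (Finset.mem_of_mem_erase h)
    · have := (Finset.mem_filter.mp (Finset.mem_of_mem_erase h)).2
      rw [haj₀] at this; exact Bool.noConfusion this
  have hj₁L : j₁ ∉ L'' := by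
    rw [← List.mem_toFinset, hcov'']
    intro h
    rcases Finset.mem_union.mp h with h | h
    · exact Finset.notMem_erase j₁ _ h
    · have := (Finset.mem_filter.mp (Finset.mem_of_mem_erase h)).2
      rw [haj₁] at this; exact Bool.noConfusion this
  have hnd : (i₀ :: j₀ :: j₁ :: L'').Nodup := by
    simp [hnd'', hi₀L, hj₀L, hj₁L, hi₀j₀, hj₁j₀, Ne.symm hj₁i₀, Ne.symm hj₁j₀]
  have hcov : ∀ ℓ : Fin (2*t+3), ℓ ∈ (i₀ :: j₀ :: j₁ :: L'') := by
    intro ℓ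
    rcases eq_or_ne ℓ i₀ with rfl | h1'
    · exact List.mem_cons_self
    rcases eq_or_ne ℓ j₀ with rfl | h2'
    · exact List.mem_cons_of_mem _ (List.mem_cons_self)
    rcases eq_or_ne ℓ j₁ with rfl | h3'
    · exact List.mem_cons_of_mem _ (List.mem_cons_of_mem _ (List.mem_cons_self))
    refine List.mem_cons_of_mem _ (List.mem_cons_of_mem _ (List.mem_cons_of_mem _ ?_))
    rw [← List.mem_toFinset, hcov'']
    cases hb : a ℓ
    · exact Finset.mem_union_left _ (Finset.mem_erase.mpr ⟨h3',
        Finset.mem_erase.mpr ⟨h2', by simp [hb]⟩⟩)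
    · exact Finset.mem_union_right _ (Finset.mem_erase.mpr ⟨h1', by simp [hb]⟩)
  have hjumps : 2 * t ≤ jumpsL f a (i₀ :: j₀ :: j₁ :: L'') := by
    rw [jumpsL, jumpsL, jumpsL, ← hv, ← ha₁, ← hb₁, hfa, hfv, hfa₁, hfb₁]
    simp only [if_neg (by simp : ¬ (false = true)), if_pos rfl,
      if_neg (by simp : ¬ (true = false))]
    omega
  calc 2 + (2 * t + t % 3) / 3 ≤ 2 * t := by omega
    _ ≤ jumpsL f a (i₀ :: j₀ :: j₁ :: L'') := hjumps
    _ ≤ winst t f := winst_ge_jumpsL a _ hnd hcov h1 (Or.inl hfa)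


/-! ### The spread case for `t = 1` -/

set_option maxHeartbeats 2000000 in
lemma caseC1 {t : ℕ} {f : (Fin (2*t+3) → Bool) → Bool} (hR : Respects t f) (ht1 : t = 1)
    (hA : ∀ x (i j : Fin (2*t+3)), onesCount x = t+1 → f x = true → x i = false → x j = true →
      f (flip (flip x j) i) = false)
    (hB : ∀ y (i j : Fin (2*t+3)), onesCount y = t+2 → f y = false → y i = false → y j = true →
      f (flip (flip y j) i) = true)
    (a : Fin (2*t+3) → Bool) (h1 : onesCount a = t + 1) (hfa : f a = true) :
    2 + (2 * t + t % 3) / 3 ≤ winst t f := by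
  subst ht1
  -- the ones and the zeros of a
  have hOcard : (univ.filter fun ℓ => a ℓ = true).card = 2 := h1
  have hZcard : (univ.filter fun ℓ => a ℓ = false).card = 3 := by
    have h := ones_add_zeros a
    have hz : zerosCount a = (univ.filter fun ℓ => a ℓ = false).card := rfl
    omega
  obtain ⟨i₁, i₂, hi12, hO⟩ := Finset.card_eq_two.mp hOcard
  obtain ⟨j₁, j₂, j₃, hj12, hj13, hj23, hZ⟩ := Finset.card_eq_three.mp hZcard
  have hmemO : ∀ ℓ, a ℓ = true → (ℓ = i₁ ∨ ℓ = i₂) := by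
    intro ℓ h
    have : ℓ ∈ univ.filter fun ℓ => a ℓ = true := by simp [h]
    rw [hO] at this
    simpa using this
  have hmemZ : ∀ ℓ, a ℓ = false → (ℓ = j₁ ∨ ℓ = j₂ ∨ ℓ = j₃) := by
    intro ℓ h
    have : ℓ ∈ univ.filter fun ℓ => a ℓ = false := by simp [h]
    rw [hZ] at this
    simpa using this
  have hai₁ : a i₁ = true := by
    have : i₁ ∈ univ.filter fun ℓ => a ℓ = true := by rw [hO]; simp
    simpa using this
  have hai₂ : a i₂ = true := by
    have : i₂ ∈ univ.filter fun ℓ => a ℓ = true := by rw [hO]; simp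
    simpa using this
  have haj₁ : a j₁ = false := by
    have : j₁ ∈ univ.filter fun ℓ => a ℓ = false := by rw [hZ]; simp
    simpa using this
  have haj₂ : a j₂ = false := by
    have : j₂ ∈ univ.filter fun ℓ => a ℓ = false := by rw [hZ]; simp
    simpa using this
  have haj₃ : a j₃ = false := by
    have : j₃ ∈ univ.filter fun ℓ => a ℓ = false := by rw [hZ]; simp
    simpa using this
  -- the complement point
  set c : Fin (2*1+3) → Bool := fun ℓ => !(a ℓ) with hc
  have honesc : onesCount c = 3 := by
    rw [hc, onesCount_compl]
    exact hZcard
  have hcval : ∀ ℓ, c ℓ = !(a ℓ) := fun ℓ => rfl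
  -- no two of the "down-neighbours of the antipode" can be coloured 1
  have Hcontra : ∀ ja jb : Fin (2*1+3), ja ≠ jb → a ja = false → a jb = false →
      f (flip c ja) = true → f (flip c jb) = true → False := by
    intro ja jb hne hja hjb hfa' hfb'
    have hcja : c ja = true := by rw [hcval, hja]; rfl
    have hones' : onesCount (flip c ja) + 1 = onesCount c := onesCount_flip_true hcja
    have h1' : onesCount (flip c ja) = 1 + 1 := by omega
    have h2' : flip c ja ja = false := by rw [flip_self, hcja]; rfl
    have h3' : flip c ja jb = true := by
      rw [flip_other _ (Ne.symm hne), hcval, hjb]; rfl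
    have hcon := hA (flip c ja) ja jb h1' hfa' h2' h3'
    have hsimp : flip (flip (flip c ja) jb) ja = flip c jb := by
      rw [flip_comm (flip c ja) jb ja, flip_flip]
    rw [hsimp, hfb'] at hcon
    exact Bool.noConfusion hcon
  -- choose the reserved coordinate jl with f (flip c jl) = false
  obtain ⟨jl, ju, jv, hlu, hlv, huv, hajl, haju, hajv, hZeq, hfl⟩ :
      ∃ jl ju jv : Fin (2*1+3), jl ≠ ju ∧ jl ≠ jv ∧ ju ≠ jv ∧
        a jl = false ∧ a ju = false ∧ a jv = false ∧
        ({j₁, j₂, j₃} : Finset (Fin (2*1+3))) = {jl, ju, jv} ∧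
        f (flip c jl) = false := by
    by_cases p1 : f (flip c j₁) = false
    · exact ⟨j₁, j₂, j₃, hj12, hj13, hj23, haj₁, haj₂, haj₃, rfl, p1⟩
    · have p1' : f (flip c j₁) = true := by
        cases hb : f (flip c j₁)
        · exact absurd hb p1
        · rfl
      by_cases p2 : f (flip c j₂) = false
      · exact ⟨j₂, j₁, j₃, Ne.symm hj12, hj23, hj13, haj₂, haj₁, haj₃,
          by ext ℓ; simp; tauto, p2⟩
      · have p2' : f (flip c j₂) = true := by
          cases hb : f (flip c j₂)
          · exact absurd hb p2
          · rfl
        exact absurd p2' (fun h => Hcontra j₁ j₂ hj12 haj₁ haj₂ p1' h)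
  -- choose the down coordinate ia with f (b ia) = true
  have Hcontra2 : f (flip (flip (flip a i₁) ju) jv) = false →
      f (flip (flip (flip a i₂) ju) jv) = false → False := by
    intro hq1 hq2
    have hji₁ : ju ≠ i₁ := fun h => by rw [h, hai₁] at haju; exact Bool.noConfusion haju
    have hji₂ : ju ≠ i₂ := fun h => by rw [h, hai₂] at haju; exact Bool.noConfusion haju
    have hvi₁ : jv ≠ i₁ := fun h => by rw [h, hai₁] at hajv; exact Bool.noConfusion hajv
    have hvi₂ : jv ≠ i₂ := fun h => by rw [h, hai₂] at hajv; exact Bool.noConfusion hajv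
    have e1 : (flip a i₁) ju = false := by rw [flip_other _ hji₁]; exact haju
    have e2 : (flip (flip a i₁) ju) jv = false := by
      rw [flip_other _ (Ne.symm huv), flip_other _ hvi₁]; exact hajv
    have hones1 : onesCount (flip a i₁) + 1 = onesCount a := onesCount_flip_true hai₁
    have hones2 : onesCount (flip (flip a i₁) ju) = onesCount (flip a i₁) + 1 :=
      onesCount_flip_false e1
    have hones3 : onesCount (flip (flip (flip a i₁) ju) jv)
        = onesCount (flip (flip a i₁) ju) + 1 := onesCount_flip_false e2
    have honesy : onesCount (flip (flip (flip a i₁) ju) jv) = 1 + 2 := by omega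
    have hyi₁ : (flip (flip (flip a i₁) ju) jv) i₁ = false := by
      rw [flip_other _ (Ne.symm hvi₁), flip_other _ (Ne.symm hji₁), flip_self, hai₁]
      rfl
    have hyi₂ : (flip (flip (flip a i₁) ju) jv) i₂ = true := by
      rw [flip_other _ (Ne.symm hvi₂), flip_other _ (Ne.symm hji₂),
        flip_other _ (Ne.symm hi12)]
      exact hai₂
    have hcon := hB (flip (flip (flip a i₁) ju) jv) i₁ i₂ honesy hq1 hyi₁ hyi₂
    -- simplify flip (flip (b i₁) i₂) i₁ = b i₂
    have hsimp : flip (flip (flip (flip (flip a i₁) ju) jv) i₂) i₁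
        = flip (flip (flip a i₂) ju) jv := by
      rw [flip_comm (flip (flip (flip a i₁) ju) jv) i₂ i₁]
      rw [flip_comm (flip (flip a i₁) ju) jv i₁]
      rw [flip_comm (flip a i₁) ju i₁]
      rw [flip_flip a i₁]
      rw [flip_comm a i₂ ju]
      rw [flip_comm (flip a ju) i₂ jv]
    rw [hsimp, hq2] at hcon
    exact Bool.noConfusion hcon
  obtain ⟨ia, ib, hiaib, haia, haib, hOeq, hfbia⟩ :
      ∃ ia ib : Fin (2*1+3), ia ≠ ib ∧ a ia = true ∧ a ib = true ∧
        ({i₁, i₂} : Finset (Fin (2*1+3))) = {ia, ib} ∧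
        f (flip (flip (flip a ia) ju) jv) = true := by
    by_cases q1 : f (flip (flip (flip a i₁) ju) jv) = true
    · exact ⟨i₁, i₂, hi12, hai₁, hai₂, rfl, q1⟩
    · have q1' : f (flip (flip (flip a i₁) ju) jv) = false := by
        cases hb : f (flip (flip (flip a i₁) ju) jv)
        · rfl
        · exact absurd hb q1
      refine ⟨i₂, i₁, Ne.symm hi12, hai₂, hai₁, by ext ℓ; simp; tauto, ?_⟩
      cases hb : f (flip (flip (flip a i₂) ju) jv)
      · exact absurd (Hcontra2 q1' hb) (fun h => h)
      · rfl
  -- distinctness of the five coordinates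
  have hial : ia ≠ jl := fun h => by rw [h, hajl] at haia; exact Bool.noConfusion haia
  have hiau : ia ≠ ju := fun h => by rw [h, haju] at haia; exact Bool.noConfusion haia
  have hiav : ia ≠ jv := fun h => by rw [h, hajv] at haia; exact Bool.noConfusion haia
  have hibl : ib ≠ jl := fun h => by rw [h, hajl] at haib; exact Bool.noConfusion haib
  have hibu : ib ≠ ju := fun h => by rw [h, haju] at haib; exact Bool.noConfusion haib
  have hibv : ib ≠ jv := fun h => by rw [h, hajv] at haib; exact Bool.noConfusion haib
  -- the f-values along the path
  have hx1 : f (flip a ia) = false := by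
    have hones1 : onesCount (flip a ia) + 1 = onesCount a := onesCount_flip_true haia
    exact hR.1 _ (by omega)
  have hx2 : f (flip (flip a ia) ju) = false := hA a ju ia h1 hfa haju haia
  have hx4 : f (flip (flip (flip (flip a ia) ju) jv) ib) = false := by
    have hE4 : flip (flip (flip (flip a ia) ju) jv) ib = flip c jl := by
      funext ℓ
      have htot : ℓ = ia ∨ ℓ = ib ∨ ℓ = jl ∨ ℓ = ju ∨ ℓ = jv := by
        cases hb : a ℓ
        · have := hmemZ ℓ hb
          have hZZ : ℓ ∈ ({j₁, j₂, j₃} : Finset (Fin (2*1+3))) := by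
            simp only [Finset.mem_insert, Finset.mem_singleton]; tauto
          rw [hZeq] at hZZ
          simp only [Finset.mem_insert, Finset.mem_singleton] at hZZ
          tauto
        · have := hmemO ℓ hb
          have hOO : ℓ ∈ ({i₁, i₂} : Finset (Fin (2*1+3))) := by
            simp only [Finset.mem_insert, Finset.mem_singleton]; tauto
          rw [hOeq] at hOO
          simp only [Finset.mem_insert, Finset.mem_singleton] at hOO
          tauto
      rcases htot with rfl | rfl | rfl | rfl | rfl
      · rw [flip_other _ hiaib, flip_other _ hiav, flip_other _ hiau, flip_self,
          flip_other _ hial, hcval]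
      · rw [flip_self, flip_other _ hibv, flip_other _ hibu,
          flip_other _ (Ne.symm hiaib), flip_other _ hibl, hcval]
      · rw [flip_other _ (Ne.symm hibl), flip_other _ hlv, flip_other _ hlu,
          flip_other _ (Ne.symm hial), flip_self, hcval, Bool.not_not]
      · rw [flip_other _ (Ne.symm hibu), flip_other _ huv, flip_self,
          flip_other _ (Ne.symm hiau), flip_other _ (Ne.symm hlu), hcval]
      · rw [flip_other _ (Ne.symm hibv), flip_self, flip_other _ (Ne.symm huv),
          flip_other _ (Ne.symm hiav), flip_other _ (Ne.symm hlv), hcval]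
    rw [hE4]
    exact hfl
  -- assemble the list and count jumps
  have hnd : ([ia, ju, jv, ib, jl] : List (Fin (2*1+3))).Nodup := by
    simp [hiaib, hial, hiau, hiav, hibl, hibu, hibv, hlu, hlv, huv,
      Ne.symm hibu, Ne.symm hibv, Ne.symm hlu, Ne.symm hlv]
  have hcov : ∀ ℓ : Fin (2*1+3), ℓ ∈ ([ia, ju, jv, ib, jl] : List (Fin (2*1+3))) := by
    intro ℓ
    have htot : ℓ = ia ∨ ℓ = ib ∨ ℓ = jl ∨ ℓ = ju ∨ ℓ = jv := by
      cases hb : a ℓ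
      · have := hmemZ ℓ hb
        have hZZ : ℓ ∈ ({j₁, j₂, j₃} : Finset (Fin (2*1+3))) := by
          simp only [Finset.mem_insert, Finset.mem_singleton]; tauto
        rw [hZeq] at hZZ
        simp only [Finset.mem_insert, Finset.mem_singleton] at hZZ
        tauto
      · have := hmemO ℓ hb
        have hOO : ℓ ∈ ({i₁, i₂} : Finset (Fin (2*1+3))) := by
          simp only [Finset.mem_insert, Finset.mem_singleton]; tauto
        rw [hOeq] at hOO
        simp only [Finset.mem_insert, Finset.mem_singleton] at hOO
        tauto
    simp only [List.mem_cons, List.mem_singleton]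
    tauto
  have hjumps : 3 ≤ jumpsL f a [ia, ju, jv, ib, jl] := by
    rw [jumpsL, jumpsL, jumpsL, jumpsL, jumpsL]
    rw [hfa, hx1, hx2, hfbia, hx4]
    simp only [if_neg (by simp : ¬ (false = true)), if_pos rfl,
      if_neg (by simp : ¬ (true = false))]
    omega
  calc (2 + (2 * 1 + 1 % 3) / 3 : ℕ) = 3 := by norm_num
    _ ≤ jumpsL f a [ia, ju, jv, ib, jl] := hjumps
    _ ≤ winst 1 f := winst_ge_jumpsL a _ hnd hcov h1 (Or.inl hfa)


/-! ### Bridging the B-side spread hypothesis through the symmetry -/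

lemma noB_of_nostar {t : ℕ} {f : (Fin (2*t+3) → Bool) → Bool}
    (h : ∀ x (i j : Fin (2*t+3)), onesCount x = t+1 → fstar f x = true → x i = false →
      x j = true → fstar f (flip (flip x j) i) = false) :
    ∀ y (i j : Fin (2*t+3)), onesCount y = t+2 → f y = false → y i = false → y j = true →
      f (flip (flip y j) i) = true := by
  intro y i j hones hfy hyi hyj
  have hij : i ≠ j := fun hcon => by rw [hcon, hyj] at hyi; exact Bool.noConfusion hyi
  set z : Fin (2*t+3) → Bool := fun ℓ => !(y ℓ) with hz
  have hz_ones : onesCount z = t+1 := by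
    rw [hz, onesCount_compl]
    have := ones_add_zeros y
    omega
  have hfz : fstar f z = true := by
    rw [show fstar f z = !(f (fun ℓ => !(z ℓ))) from rfl]
    have hyy : (fun ℓ => !(z ℓ)) = y := by funext ℓ; rw [hz]; simp
    rw [hyy, hfy]
    rfl
  have hzi : z i = true := by rw [hz]; simp [hyi]
  have hzj : z j = false := by rw [hz]; simp [hyj]
  have hkey := h z j i hz_ones hfz hzj hzi
  have hcompl : flip (flip z i) j = fun ℓ => !((flip (flip y j) i) ℓ) := by
    funext ℓ
    by_cases h1 : ℓ = i
    · subst h1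
      rw [flip_other _ hij, flip_self, hz]
      rw [flip_self, flip_other _ hij]
    · by_cases h2 : ℓ = j
      · subst h2
        rw [flip_self, flip_other _ (Ne.symm hij), hz]
        rw [flip_other _ (Ne.symm hij), flip_self]
      · rw [flip_other _ h2, flip_other _ h1, hz]
        rw [flip_other _ h1, flip_other _ h2]
  rw [hcompl] at hkey
  have hfin : fstar f (fun ℓ => !((flip (flip y j) i) ℓ)) = !(f (flip (flip y j) i)) := by
    rw [show fstar f (fun ℓ => !((flip (flip y j) i) ℓ))
      = !(f (fun ℓ => !(!((flip (flip y j) i) ℓ)))) from rfl]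
    congr 1
    apply congrArg
    funext ℓ
    simp
  rw [hfin] at hkey
  cases hb : f (flip (flip y j) i)
  · rw [hb] at hkey; exact Bool.noConfusion hkey
  · rfl

end TwoStripsAux

open TwoStripsAux in
/-- For `t ≥ 1`, every colouring `f` of `H_{2t+3}` with `t_f = t` satisfies
`winst f ≥ 2 + (2t + (t mod 3))/3`; that is, `winst(2t+3,t) ≥ 2 + (2t + (t mod 3))/3`. -/
theorem winst_twostrips' (t : ℕ) (ht : 1 ≤ t) :
    ∀ f : (Fin (2 * t + 3) → Bool) → Bool,
      (Respects t f ∧ ¬ Respects (t+1) f) →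
      2 + (2 * t + t % 3) / 3 ≤ winst t f := by
  intro f htf
  obtain ⟨hR, hNR⟩ := htf
  have hwitness : (∃ x, onesCount x = t+1 ∧ f x = true) ∨
      (∃ x, onesCount x = t+1 ∧ fstar f x = true) := by
    rw [Respects] at hNR
    rcases not_and_or.mp hNR with h | h
    · push_neg at h
      obtain ⟨x, hx1, hx2⟩ := h
      left
      have hfx : f x = true := by
        cases hb : f x
        · exact absurd hb hx2
        · rfl
      have hgt : ¬ (onesCount x ≤ t) := fun hle => by
        rw [hR.1 x hle] at hfx; exact Bool.noConfusion hfx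
      exact ⟨x, by omega, hfx⟩
    · push_neg at h
      obtain ⟨x, hx1, hx2⟩ := h
      right
      have hfx : f x = false := by
        cases hb : f x
        · rfl
        · exact absurd hb hx2
      have hgt : ¬ (zerosCount x ≤ t) := fun hle => by
        rw [hR.2 x hle] at hfx; exact Bool.noConfusion hfx
      refine ⟨fun ℓ => !(x ℓ), ?_, ?_⟩
      · rw [onesCount_compl]; omega
      · rw [show fstar f (fun ℓ => !(x ℓ)) = !(f (fun ℓ => !(!(x ℓ)))) from rfl]
        have hxx : (fun ℓ => !(!(x ℓ))) = x := by funext ℓ; simp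
        rw [hxx, hfx]
        rfl
  by_cases hA2 : ∃ x, ∃ (i j : Fin (2*t+3)), onesCount x = t+1 ∧ f x = true ∧ x i = false ∧
      x j = true ∧ f (flip (flip x j) i) = true
  · obtain ⟨x, i, j, h1, h2, h3, h4, h5⟩ := hA2
    exact caseA hR x i j h1 h2 h3 h4 h5
  by_cases hB2 : ∃ x, ∃ (i j : Fin (2*t+3)), onesCount x = t+1 ∧ fstar f x = true ∧
      x i = false ∧ x j = true ∧ fstar f (flip (flip x j) i) = true
  · obtain ⟨x, i, j, h1, h2, h3, h4, h5⟩ := hB2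
    exact le_trans (caseA (respects_fstar hR) x i j h1 h2 h3 h4 h5) (winst_fstar_le t f)
  have hA' : ∀ x (i j : Fin (2*t+3)), onesCount x = t+1 → f x = true → x i = false →
      x j = true → f (flip (flip x j) i) = false := by
    intro x i j h1 h2 h3 h4
    cases hb : f (flip (flip x j) i)
    · rfl
    · exact absurd ⟨x, i, j, h1, h2, h3, h4, hb⟩ hA2
  have hAstar' : ∀ x (i j : Fin (2*t+3)), onesCount x = t+1 → fstar f x = true →
      x i = false → x j = true → fstar f (flip (flip x j) i) = false := by
    intro x i j h1 h2 h3 h4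
    cases hb : fstar f (flip (flip x j) i)
    · rfl
    · exact absurd ⟨x, i, j, h1, h2, h3, h4, hb⟩ hB2
  have hB' : ∀ y (i j : Fin (2*t+3)), onesCount y = t+2 → f y = false → y i = false →
      y j = true → f (flip (flip y j) i) = true := noB_of_nostar hAstar'
  have hBstar' : ∀ y (i j : Fin (2*t+3)), onesCount y = t+2 → fstar f y = false →
      y i = false → y j = true → fstar f (flip (flip y j) i) = true := by
    apply noB_of_nostar
    intro x i j h1 h2 h3 h4
    rw [fstar_fstar] at h2 ⊢
    exact hA' x i j h1 h2 h3 h4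
  rcases hwitness with ⟨x, hx1, hx2⟩ | ⟨x, hx1, hx2⟩
  · rcases eq_or_lt_of_le ht with h1' | h2'
    · exact caseC1 hR h1'.symm hA' hB' x hx1 hx2
    · exact caseC hR (by omega) hA' hB' x hx1 hx2
  · refine le_trans ?_ (winst_fstar_le t f)
    rcases eq_or_lt_of_le ht with h1' | h2'
    · exact caseC1 (respects_fstar hR) h1'.symm hAstar' hBstar' x hx1 hx2
    · exact caseC (respects_fstar hR) (by omega) hAstar' hBstar' x hx1 hx2

theorem winst_twostrips (t : ℕ) (ht : 1 ≤ t) :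
    ∀ f : (Fin (2 * t + 3) → Bool) → Bool, tfEq f t →
      2 + (2 * t + t % 3) / 3 ≤ winst t f := by
  intro f htf
  exact winst_twostrips' t ht f ⟨htf.1, htf.2⟩
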